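/- Let γ > 0, λ̃_1 λ̃_2 > 0, and λ_1 > λ_2 > 0. Then the derivative of ε ↦ λ(ε,γ) at ε = 0 is strictly positive, and consequently there exists ε̃ < 0 with |λ(ε̃,γ)| < |λ_2| = |λ(0,γ)|. -/

import Mathlib

theorem stmt10 (l1 l2 t1 t2 γ : ℝ) (ht : t1 * t2 > 0) (hγ : γ > 0)
    (h1 : l1 > l2) (h2 : l2 > 0)
    (lam : ℝ → ℝ)
    (hlam : ∀ ε, lam ε =
      (l1 * t2 * ε ^ 2 + γ * (l1 * t2 + l2 * t1) * ε + l2 * t1)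
        / (t2 * ε ^ 2 + γ * (t1 + t2) * ε + t1)) :
    0 < deriv lam 0 ∧ ∃ e : ℝ, e < 0 ∧ |lam e| < |l2| := by
  have ht1 : t1 ≠ 0 := by
    intro h; rw [h] at ht; simp at ht
  have hlamfun : lam = fun ε : ℝ =>
      (l1 * t2 * ε ^ 2 + γ * (l1 * t2 + l2 * t1) * ε + l2 * t1)
        / (t2 * ε ^ 2 + γ * (t1 + t2) * ε + t1) := funext hlam
  have hN : HasDerivAt (fun ε : ℝ => l1 * t2 * ε ^ 2 + γ * (l1 * t2 + l2 * t1) * ε + l2 * t1)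
      (γ * (l1 * t2 + l2 * t1)) 0 := by
    have := (((hasDerivAt_pow 2 (0:ℝ)).const_mul (l1 * t2)).add
      ((hasDerivAt_id (0:ℝ)).const_mul (γ * (l1 * t2 + l2 * t1)))).add_const (l2 * t1)
    convert this using 1 <;> norm_num <;> rfl
  have hD : HasDerivAt (fun ε : ℝ => t2 * ε ^ 2 + γ * (t1 + t2) * ε + t1)
      (γ * (t1 + t2)) 0 := by
    have := (((hasDerivAt_pow 2 (0:ℝ)).const_mul t2).add
      ((hasDerivAt_id (0:ℝ)).const_mul (γ * (t1 + t2)))).add_const t1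
    convert this using 1 <;> norm_num <;> rfl
  have hD0 : (t2 * (0:ℝ) ^ 2 + γ * (t1 + t2) * 0 + t1) ≠ 0 := by
    simpa using ht1
  have hQ : HasDerivAt lam
      ((γ * (l1 * t2 + l2 * t1) * (t2 * (0:ℝ) ^ 2 + γ * (t1 + t2) * 0 + t1)
        - (l1 * t2 * (0:ℝ) ^ 2 + γ * (l1 * t2 + l2 * t1) * 0 + l2 * t1) * (γ * (t1 + t2)))
        / (t2 * (0:ℝ) ^ 2 + γ * (t1 + t2) * 0 + t1) ^ 2) 0 := by
    rw [hlamfun]; exact hN.div hD hD0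
  have hval : (γ * (l1 * t2 + l2 * t1) * (t2 * (0:ℝ) ^ 2 + γ * (t1 + t2) * 0 + t1)
        - (l1 * t2 * (0:ℝ) ^ 2 + γ * (l1 * t2 + l2 * t1) * 0 + l2 * t1) * (γ * (t1 + t2)))
        / (t2 * (0:ℝ) ^ 2 + γ * (t1 + t2) * 0 + t1) ^ 2
      = γ * (l1 - l2) * (t1 * t2) / t1 ^ 2 := by
    simp; field_simp; ring
  have hdpos : 0 < γ * (l1 - l2) * (t1 * t2) / t1 ^ 2 := by
    apply div_pos
    · exact mul_pos (mul_pos hγ (sub_pos.mpr h1)) ht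
    · positivity
  have hQ' : HasDerivAt lam (γ * (l1 - l2) * (t1 * t2) / t1 ^ 2) 0 := hval ▸ hQ
  have hderiv : deriv lam 0 = γ * (l1 - l2) * (t1 * t2) / t1 ^ 2 := hQ'.deriv
  refine ⟨by rw [hderiv]; exact hdpos, ?_⟩
  have hlam0 : lam 0 = l2 := by
    rw [hlam 0]; simp [ht1]
  -- slope eventually positive near 0 (excluding 0)
  have hslope : Filter.Tendsto (slope lam 0) (nhdsWithin 0 {(0:ℝ)}ᶜ)
      (nhds (γ * (l1 - l2) * (t1 * t2) / t1 ^ 2)) :=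
    hasDerivAt_iff_tendsto_slope.mp hQ'
  have hslope_pos : ∀ᶠ x in nhdsWithin 0 {(0:ℝ)}ᶜ, 0 < slope lam 0 x :=
    hslope.eventually (eventually_gt_nhds hdpos)
  have hmono : nhdsWithin (0:ℝ) (Set.Iio 0) ≤ nhdsWithin 0 {(0:ℝ)}ᶜ :=
    nhdsWithin_mono 0 (fun x hx => ne_of_lt hx)
  have hslope_pos' : ∀ᶠ x in nhdsWithin (0:ℝ) (Set.Iio 0), 0 < slope lam 0 x :=
    hslope_pos.filter_mono hmono
  have hneg : ∀ᶠ x in nhdsWithin (0:ℝ) (Set.Iio 0), x < 0 :=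
    eventually_mem_nhdsWithin
  have hcont : ContinuousAt lam 0 := hQ'.continuousAt
  have hpos : ∀ᶠ x in nhdsWithin (0:ℝ) (Set.Iio 0), 0 < lam x := by
    have : ∀ᶠ x in nhds (0:ℝ), 0 < lam x :=
      hcont.eventually (eventually_gt_nhds (by rw [hlam0]; exact h2))
    exact this.filter_mono nhdsWithin_le_nhds
  have : ∀ᶠ x in nhdsWithin (0:ℝ) (Set.Iio 0),
      x < 0 ∧ 0 < slope lam 0 x ∧ 0 < lam x :=
    hneg.and (hslope_pos'.and hpos)
  obtain ⟨e, he, hse, hle⟩ := this.exists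
  refine ⟨e, he, ?_⟩
  have hlt : lam e < l2 := by
    have hs : slope lam 0 e = (lam e - lam 0) / (e - 0) := by
      rw [slope_def_field]
    rw [hs, hlam0] at hse
    have he0 : e - 0 < 0 := by linarith
    rcases div_pos_iff.mp hse with ⟨_, hb⟩ | ⟨ha, _⟩
    · linarith
    · linarith
  rw [abs_of_pos hle, abs_of_pos h2]
  exact hlt
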